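/- arXiv:1506.08107 — 5 statements merged into one kernel-verified Lean document; each statement's English description precedes it below -/
import Mathlib

section
/- With g_n as in the Poincaré recursion in noncommutative symmetric functions and g̃_n = (q;q)_n g_n where (q;q)_n = (q-1)(q^2-1)···(q^n-1), one has g̃_2 = (q-1)S_2 + 2 S_1 S_1 and g̃_3 = (q-1)(q^2-1) S_3 + 3(q^2-1) S_2 S_1 + 2(q-1) S_1 S_2 + (5+q) S_1 S_1 S_1. -/
noncomputable section

/-- **Cleared first terms of the Poincaré recursion.** Let `g : ℕ → A` satisfy the Poincaré
recursion in a ring in which `q` is central, with `g 0 = 1`, and set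
`g̃_n = (q-1)(q^2-1)⋯(q^n-1) g_n`.  Then
`g̃_2 = (q-1) S_2 + 2 S_1 S_1` and
`g̃_3 = (q-1)(q^2-1) S_3 + 3 (q^2-1) S_2 S_1 + 2 (q-1) S_1 S_2 + (5+q) S_1 S_1 S_1`. -/
theorem poincare_cleared_first_terms
    {A : Type*} [Ring A] (q : A) (hq : ∀ a : A, Commute q a)
    (S : ℕ → A) (g : ℕ → A)
    (hg0 : g 0 = 1)
    (hrec : ∀ n : ℕ, 1 ≤ n →
      (q ^ n - 1) * g n =
        ∑ k ∈ Finset.Icc 1 n, S k *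
          ∑ f ∈ Finset.Nat.antidiagonalTuple (k + 1) (n - k),
            (List.ofFn fun i => g (f i)).prod) :
    ((q - 1) * (q ^ 2 - 1)) * g 2 = (q - 1) * S 2 + 2 * (S 1 * S 1) ∧
    ((q - 1) * (q ^ 2 - 1) * (q ^ 3 - 1)) * g 3 =
      ((q - 1) * (q ^ 2 - 1)) * S 3 + 3 * ((q ^ 2 - 1) * (S 2 * S 1)) +
        2 * ((q - 1) * (S 1 * S 2)) + (5 + q) * (S 1 * S 1 * S 1) := by
  have s20 : Finset.Nat.antidiagonalTuple 2 0 = {![0,0]} := by decide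
  have s21 : Finset.Nat.antidiagonalTuple 2 1 = {![1,0], ![0,1]} := by decide
  have s22 : Finset.Nat.antidiagonalTuple 2 2 = {![2,0], ![1,1], ![0,2]} := by decide
  have s30 : Finset.Nat.antidiagonalTuple 3 0 = {![0,0,0]} := by decide
  have s31 : Finset.Nat.antidiagonalTuple 3 1 = {![1,0,0], ![0,1,0], ![0,0,1]} := by decide
  have s40 : Finset.Nat.antidiagonalTuple 4 0 = {![0,0,0,0]} := by decide
  have i1 : Finset.Icc 1 1 = ({1} : Finset ℕ) := by decide
  have i2 : Finset.Icc 1 2 = ({1,2} : Finset ℕ) := by decide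
  have i3 : Finset.Icc 1 3 = ({1,2,3} : Finset ℕ) := by decide
  have e1 := hrec 1 le_rfl
  have e2 := hrec 2 (by norm_num)
  have e3 := hrec 3 (by norm_num)
  rw [i1] at e1; rw [i2] at e2; rw [i3] at e3
  norm_num [s20, s21, s22, s30, s31, s40, hg0] at e1 e2 e3
  simp [hg0, Matrix.cons_val] at e2 e3
  -- e1 : (q - 1) * g 1 = S 1
  -- e2 : (q ^ 2 - 1) * g 2 = S 1 * (g 1 + g 1) + S 2
  -- e3 : (q ^ 3 - 1) * g 3 = S 1 * (g 2 + (g 1 * g 1 + g 2)) + (S 2 * (g 1 + (g 1 + g 1)) + S 3)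
  have hc1 : ∀ a : A, Commute (q - 1) a := fun a => (hq a).sub_left (Commute.one_left a)
  have hc2 : ∀ a : A, Commute (q ^ 2 - 1) a :=
    fun a => ((hq a).pow_left 2).sub_left (Commute.one_left a)
  have hcp : ∀ a : A, Commute (q + 1) a := fun a => (hq a).add_left (Commute.one_left a)
  have sw : ∀ x y z : A, Commute x y → x * (y * z) = y * (x * z) := by
    intro x y z h; rw [← mul_assoc, h.eq, mul_assoc]
  have P1 : ((q - 1) * (q ^ 2 - 1)) * g 2 = (q - 1) * S 2 + 2 * (S 1 * S 1) := by
    rw [mul_assoc, e2, mul_add, sw _ _ _ (hc1 (S 1)), mul_add, e1]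
    noncomm_ring
  refine ⟨P1, ?_⟩
  have hgg : (q - 1) * ((q - 1) * (g 1 * g 1)) = S 1 * S 1 := by
    rw [← mul_assoc (q-1) (g 1), e1, sw _ _ _ (hc1 (S 1)), e1]
  have hfac : (q - 1) * (q ^ 2 - 1) = (q + 1) * ((q - 1) * (q - 1)) := by noncomm_ring
  have hfac2 : (q - 1) * (q ^ 2 - 1) = (q ^ 2 - 1) * (q - 1) := ((hc2 (q-1)).symm).eq
  have cgg : ((q - 1) * (q ^ 2 - 1)) * (g 1 * g 1) = (q + 1) * (S 1 * S 1) := by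
    rw [hfac, mul_assoc, mul_assoc, ← mul_assoc (q-1) (q-1), mul_assoc (q-1) (q-1), hgg]
  have cg1 : ((q - 1) * (q ^ 2 - 1)) * g 1 = (q ^ 2 - 1) * S 1 := by
    rw [hfac2, mul_assoc, e1]
  have hcc : ∀ a : A, Commute ((q - 1) * (q ^ 2 - 1)) a := fun a => (hc1 a).mul_left (hc2 a)
  have sw1 : ∀ z : A, ((q-1)*(q^2-1))*(S 1*z) = S 1*(((q-1)*(q^2-1))*z) :=
    fun z => sw _ _ _ (hcc (S 1))
  have sw2 : ∀ z : A, ((q-1)*(q^2-1))*(S 2*z) = S 2*(((q-1)*(q^2-1))*z) :=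
    fun z => sw _ _ _ (hcc (S 2))
  have sw3 : ∀ z : A, S 1*((q-1)*z) = (q-1)*(S 1*z) := fun z => sw _ _ _ ((hc1 (S 1)).symm)
  have sw4 : ∀ z : A, S 1*((q+1)*z) = (q+1)*(S 1*z) := fun z => sw _ _ _ ((hcp (S 1)).symm)
  have sw5 : ∀ z : A, S 2*((q^2-1)*z) = (q^2-1)*(S 2*z) := fun z => sw _ _ _ ((hc2 (S 2)).symm)
  rw [mul_assoc, e3]
  simp only [mul_add]
  simp only [sw1, sw2]
  simp only [P1, cgg, cg1]
  simp only [mul_add, sw3, sw4, sw5]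
  noncomm_ring
end
end

section
/- Setting q = 1 in the cleared Poincaré recursion, g̃_n specializes to n! · S_1^n; that is, the polynomials g̃_n ∈ Sym ⊗ ℚ[q] satisfy g̃_n|_{q=1} = n! S_1^n for all n ≥ 1. -/
noncomputable section

open Finset

/-- The noncommutative Fa`a di Bruno / noncommutative symmetric function model: the monoid
algebra over `ℚ(q)` of the free monoid on positive integer letters; the basis element
indexed by the word (composition) `I = (i_1,…,i_r)` represents `S^I = S_{i_1}⋯S_{i_r}`. -/
abbrev NSym := MonoidAlgebra (RatFunc ℚ) (FreeMonoid ℕ)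

/-- `S^I` for a composition (word) `I`. -/
def Sw (l : List ℕ) : NSym := MonoidAlgebra.single (FreeMonoid.ofList l) 1

/-- The `q`-Pochhammer `(q;q)_n = (q-1)(q^2-1)⋯(q^n-1)` with `q = X`. -/
def qPoch (n : ℕ) : RatFunc ℚ := ∏ k ∈ Finset.Icc 1 n, ((RatFunc.X : RatFunc ℚ) ^ k - 1)

set_option maxHeartbeats 1000000

-- mapC infrastructure
section MapC
variable {R S : Type*} [CommSemiring R] [CommSemiring S]

def mapC (f : R →+* S) (x : MonoidAlgebra R (FreeMonoid ℕ)) :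
    MonoidAlgebra S (FreeMonoid ℕ) :=
  MonoidAlgebra.ofCoeff (Finsupp.mapRange f f.map_zero x.coeff)

variable (f : R →+* S)

lemma mapC_apply (x : MonoidAlgebra R (FreeMonoid ℕ)) (w : FreeMonoid ℕ) :
    (mapC f x).coeff w = f (x.coeff w) := Finsupp.mapRange_apply (hf := f.map_zero)

lemma mapC_single (w : FreeMonoid ℕ) (c : R) :
    mapC f (MonoidAlgebra.single w c) = MonoidAlgebra.single w (f c) :=
  congrArg MonoidAlgebra.ofCoeff Finsupp.mapRange_single

lemma mapC_add (x y : MonoidAlgebra R (FreeMonoid ℕ)) :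
    mapC f (x + y) = mapC f x + mapC f y := by
  ext w
  rw [mapC_apply, MonoidAlgebra.coeff_add, Finsupp.add_apply, MonoidAlgebra.coeff_add, Finsupp.add_apply,
    mapC_apply, mapC_apply, map_add]

lemma mapC_zero : mapC f 0 = 0 := by ext w; simp [mapC_apply]

lemma mapC_sum {ι : Type*} (s : Finset ι) (x : ι → MonoidAlgebra R (FreeMonoid ℕ)) :
    mapC f (∑ i ∈ s, x i) = ∑ i ∈ s, mapC f (x i) := by
  classical
  induction s using Finset.induction with
  | empty => simp [mapC_zero]
  | insert _ _ h ih => rw [Finset.sum_insert h, Finset.sum_insert h, mapC_add, ih]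

lemma mapC_one : mapC f 1 = 1 := by
  rw [MonoidAlgebra.one_def, mapC_single, map_one, MonoidAlgebra.one_def]

lemma mapC_mul (x y : MonoidAlgebra R (FreeMonoid ℕ)) :
    mapC f (x * y) = mapC f x * mapC f y := by
  induction x using MonoidAlgebra.induction_linear with
  | zero => simp [mapC_zero]
  | add a b ha hb => rw [add_mul, mapC_add, ha, hb, mapC_add, add_mul]
  | single a b =>
    induction y using MonoidAlgebra.induction_linear with
    | zero => simp [mapC_zero]
    | add c d hc hd => rw [mul_add, mapC_add, hc, hd, mapC_add, mul_add]
    | single c d =>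
      rw [MonoidAlgebra.single_mul_single, mapC_single, mapC_single, mapC_single,
        MonoidAlgebra.single_mul_single, map_mul]

lemma mapC_smul (c : R) (x : MonoidAlgebra R (FreeMonoid ℕ)) :
    mapC f (c • x) = f c • mapC f x := by
  ext w
  rw [mapC_apply, MonoidAlgebra.coeff_smul_apply, MonoidAlgebra.coeff_smul_apply, mapC_apply, smul_eq_mul,
    smul_eq_mul, map_mul]


lemma mapC_listProd (l : List (MonoidAlgebra R (FreeMonoid ℕ))) :
    mapC f l.prod = (l.map (mapC f)).prod := by
  induction l with
  | nil => simp [mapC_one]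
  | cons a t ih => simp [List.prod_cons, mapC_mul, ih]

end MapC

-- algebra list lemmas
lemma ofFn_smul_prod {S A : Type*} [CommSemiring S] [Semiring A] [Algebra S A] :
    ∀ (r : ℕ) (c : Fin r → S) (x : Fin r → A),
      (List.ofFn fun i => c i • x i).prod = (∏ i, c i) • (List.ofFn x).prod := by
  intro r
  induction r with
  | zero => intro c x; simp
  | succ r ih =>
    intro c x
    rw [List.ofFn_succ, List.prod_cons, List.ofFn_succ, List.prod_cons,
      ih (fun i => c i.succ) (fun i => x i.succ), Fin.prod_univ_succ,
      smul_mul_assoc, mul_smul_comm, smul_smul]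

lemma ofFn_pow_prod {A : Type*} [Monoid A] (x : A) :
    ∀ (r : ℕ) (k : Fin r → ℕ),
      (List.ofFn fun i => x ^ k i).prod = x ^ (∑ i, k i) := by
  intro r
  induction r with
  | zero => intro k; simp
  | succ r ih =>
    intro k
    rw [List.ofFn_succ, List.prod_cons, ih (fun i => k i.succ), Fin.sum_univ_succ, pow_add]

def qPochP (n : ℕ) : Polynomial ℚ := ∏ k ∈ Finset.Icc 1 n, ((Polynomial.X : Polynomial ℚ) ^ k - 1)

lemma qPochP_zero : qPochP 0 = 1 := by simp [qPochP]

lemma qPochP_succ (n : ℕ) :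
    qPochP (n + 1) = qPochP n * ((Polynomial.X : Polynomial ℚ) ^ (n + 1) - 1) :=
  Finset.prod_Icc_succ_top (Nat.succ_le_succ n.zero_le) _

lemma qPoch_succ (n : ℕ) :
    qPoch (n + 1) = qPoch n * ((RatFunc.X : RatFunc ℚ) ^ (n + 1) - 1) :=
  Finset.prod_Icc_succ_top (Nat.succ_le_succ n.zero_le) _

lemma qPochP_map (n : ℕ) :
    algebraMap (Polynomial ℚ) (RatFunc ℚ) (qPochP n) = qPoch n := by
  rw [qPochP, map_prod, qPoch]
  exact Finset.prod_congr rfl fun k _ => by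
    rw [map_sub, map_pow, RatFunc.algebraMap_X, map_one]

lemma exists_B : ∀ a b : ℕ, ∃ B : Polynomial ℚ,
    qPochP a * qPochP b * B = qPochP (a + b) ∧ B.eval 1 = ((a + b).choose a : ℚ) := by
  intro a
  induction a with
  | zero =>
    intro b
    exact ⟨1, by simp [qPochP_zero], by simp⟩
  | succ a iha =>
    intro b
    induction b with
    | zero =>
      exact ⟨1, by simp [qPochP_zero], by simp⟩
    | succ b ihb =>
      obtain ⟨B1, hB1, hB1e⟩ := iha (b + 1)
      obtain ⟨B2, hB2, hB2e⟩ := ihb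
      refine ⟨B1 + Polynomial.X ^ (a + 1) * B2, ?_, ?_⟩
      · have key : qPochP (a + 1) * qPochP (b + 1) * (B1 + Polynomial.X ^ (a + 1) * B2)
            = (Polynomial.X ^ (a + 1) - 1) * (qPochP a * qPochP (b + 1) * B1)
              + Polynomial.X ^ (a + 1) *
                ((Polynomial.X ^ (b + 1) - 1) * (qPochP (a + 1) * qPochP b * B2)) := by
          rw [qPochP_succ a, qPochP_succ b]; ring
        rw [key, hB1, hB2]
        have h1 : a + (b + 1) = a + b + 1 := by omega
        have h2 : a + 1 + b = a + b + 1 := by omega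
        have h3 : a + 1 + (b + 1) = a + b + 1 + 1 := by omega
        rw [h1, h2, h3, qPochP_succ (a + b + 1)]
        ring
      · have h1 : a + (b + 1) = a + b + 1 := by omega
        have h2 : a + 1 + b = a + b + 1 := by omega
        have h3 : a + 1 + (b + 1) = a + b + 1 + 1 := by omega
        rw [Polynomial.eval_add, Polynomial.eval_mul, Polynomial.eval_pow, Polynomial.eval_X,
          hB1e, hB2e, h1, h2, h3, one_pow, one_mul]
        have := Nat.choose_succ_succ (a + b + 1) a
        push_cast [this]
        ring

lemma exists_M : ∀ (r : ℕ) (f : Fin r → ℕ), ∃ M : Polynomial ℚ,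
    M * ∏ i, qPochP (f i) = qPochP (∑ i, f i) ∧
    M.eval 1 * ∏ i, ((f i).factorial : ℚ) = (((∑ i, f i).factorial : ℚ)) := by
  intro r
  induction r with
  | zero => intro f; exact ⟨1, by simp [qPochP_zero], by simp⟩
  | succ r ih =>
    intro f
    obtain ⟨M', h1, h2⟩ := ih (fun i => f i.succ)
    obtain ⟨B, hB, hBe⟩ := exists_B (f 0) (∑ i : Fin r, f (Fin.succ i))
    refine ⟨B * M', ?_, ?_⟩
    · rw [Fin.prod_univ_succ, Fin.sum_univ_succ]
      calc B * M' * (qPochP (f 0) * ∏ i : Fin r, qPochP (f i.succ))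
          = qPochP (f 0) * (M' * ∏ i : Fin r, qPochP (f i.succ)) * B := by ring
        _ = qPochP (f 0) * qPochP (∑ i : Fin r, f (Fin.succ i)) * B := by rw [h1]
        _ = qPochP (f 0 + ∑ i : Fin r, f (Fin.succ i)) := hB
    · rw [Fin.prod_univ_succ, Fin.sum_univ_succ, Polynomial.eval_mul]
      have hnat : (f 0 + ∑ i : Fin r, f (Fin.succ i)).choose (f 0) * (f 0).factorial
            * (∑ i : Fin r, f (Fin.succ i)).factorial
          = (f 0 + ∑ i : Fin r, f (Fin.succ i)).factorial := by
        have h := Nat.choose_mul_factorial_mul_factorial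
          (Nat.le_add_right (f 0) (∑ i : Fin r, f (Fin.succ i)))
        rwa [Nat.add_sub_cancel_left] at h
      calc B.eval 1 * M'.eval 1 * (((f 0).factorial : ℚ)
              * ∏ i : Fin r, ((f i.succ).factorial : ℚ))
          = B.eval 1 * ((f 0).factorial : ℚ)
              * (M'.eval 1 * ∏ i : Fin r, ((f i.succ).factorial : ℚ)) := by ring
        _ = ((f 0 + ∑ i : Fin r, f (Fin.succ i)).choose (f 0) : ℚ) * ((f 0).factorial : ℚ)
              * (((∑ i : Fin r, f (Fin.succ i)).factorial : ℚ)) := by rw [hBe, h2]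
        _ = (((f 0 + ∑ i : Fin r, f (Fin.succ i)).factorial : ℚ)) := by
              exact_mod_cast congrArg (Nat.cast (R := ℚ)) hnat

lemma exists_Q (t r : ℕ) (f : Fin r → ℕ) : ∃ Q : Polynomial ℚ,
    ((∑ i, f i) ≤ t → Q * ∏ i, qPochP (f i) = qPochP t) ∧
    Q.eval 1 * ∏ i, ((f i).factorial : ℚ) =
      (if (∑ i, f i) = t then (t.factorial : ℚ) else 0) := by
  by_cases h : (∑ i, f i) = t
  · obtain ⟨M, h1, h2⟩ := exists_M r f
    exact ⟨M, fun _ => by rw [h1, h], by rw [if_pos h, h2, h]⟩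
  · by_cases hle : (∑ i, f i) ≤ t
    · have hlt : (∑ i, f i) < t := lt_of_le_of_ne hle h
      obtain ⟨M, h1, _⟩ := exists_M r f
      set s := ∑ i, f i with hs
      refine ⟨(∏ k ∈ Finset.Icc (s + 1) t, ((Polynomial.X : Polynomial ℚ) ^ k - 1)) * M,
        fun _ => ?_, ?_⟩
      · rw [mul_assoc, h1, mul_comm, qPochP, qPochP,
          Finset.Icc_add_one_left_eq_Ioc, ← zero_add (1 : ℕ), Finset.Icc_add_one_left_eq_Ioc, Finset.Icc_add_one_left_eq_Ioc]
        exact Finset.prod_Ioc_consecutive _ (Nat.zero_le s) hlt.le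
      · rw [if_neg h, Polynomial.eval_mul]
        have hz : Polynomial.eval 1
            (∏ k ∈ Finset.Icc (s + 1) t, ((Polynomial.X : Polynomial ℚ) ^ k - 1)) = 0 := by
          rw [Polynomial.eval_prod]
          refine Finset.prod_eq_zero (Finset.mem_Icc.mpr ⟨hlt, le_refl t⟩) ?_
          simp
        rw [hz, zero_mul, zero_mul]
    · exact ⟨0, fun hc => absurd hc hle, by rw [if_neg h]; simp⟩


lemma ofList_one_pow : ∀ n : ℕ,
    (FreeMonoid.ofList [1] : FreeMonoid ℕ) ^ n = FreeMonoid.ofList (List.replicate n 1) := by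
  intro n
  induction n with
  | zero => rfl
  | succ n ih =>
    rw [pow_succ, ih, ← FreeMonoid.ofList_append, ← List.replicate_succ']

/-- **Specialization at `q = 1`.** Let `g : ℕ → NSym` be the solution of the noncommutative
Poincaré equation `g(qA) = Σ_{n≥0} S_n(A) g(A)^{n+1}`, written componentwise as
`q^m • g_m = g_m + Σ_{n=1}^m S_n Σ_{i_1+⋯+i_{n+1}=m-n} g_{i_1}⋯g_{i_{n+1}}` with `g 0 = 1`.
Then for each `n ≥ 1` and each composition `I` of `n`, the coefficient of `S^I` in
`g̃_n = (q;q)_n g_n` is a polynomial in `q` whose value at `q = 1` is `n!` if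
`I = (1,1,…,1)` and `0` otherwise; that is, `g̃_n|_{q=1} = n! · S_1^n`. -/
theorem cleared_poincare_at_q_eq_one
    (g : ℕ → NSym) (hg0 : g 0 = 1)
    (hrec : ∀ m : ℕ, 1 ≤ m →
      ((RatFunc.X : RatFunc ℚ) ^ m) • g m =
        g m + ∑ n ∈ Finset.Icc 1 m, Sw [n] *
          ∑ f ∈ Finset.Nat.antidiagonalTuple (n + 1) (m - n),
            (List.ofFn fun i => g (f i)).prod) :
    ∀ n : ℕ, 1 ≤ n → ∀ I : Composition n,
      ∃ p : Polynomial ℚ,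
        algebraMap (Polynomial ℚ) (RatFunc ℚ) p =
          qPoch n * (g n).coeff (FreeMonoid.ofList I.blocks) ∧
        p.eval 1 = if I.blocks = List.replicate n 1 then ((Nat.factorial n : ℚ)) else 0 := by
  classical
  choose Q hQ1 hQ2 using exists_Q
  have claim : ∀ m : ℕ, ∃ P : MonoidAlgebra (Polynomial ℚ) (FreeMonoid ℕ),
      mapC (algebraMap (Polynomial ℚ) (RatFunc ℚ)) P = qPoch m • g m ∧
      mapC (Polynomial.evalRingHom (1 : ℚ)) P
        = (m.factorial : ℚ) • (MonoidAlgebra.single (FreeMonoid.ofList [1]) (1 : ℚ)) ^ m := by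
    intro m
    induction m using Nat.strong_induction_on with
    | _ m ih =>
    match m, ih with
    | 0, _ =>
      refine ⟨1, ?_, ?_⟩
      · rw [mapC_one, hg0, show qPoch 0 = 1 from by simp [qPoch], one_smul]
      · rw [mapC_one]; simp
    | (m + 1), ih =>
      choose P' hP1 hP2 using ih
      set Pk : ℕ → MonoidAlgebra (Polynomial ℚ) (FreeMonoid ℕ) :=
        fun k => if h : k < m + 1 then P' k h else 0 with hPkdef
      have hPk1 : ∀ k, k < m + 1 →
          mapC (algebraMap (Polynomial ℚ) (RatFunc ℚ)) (Pk k) = qPoch k • g k := by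
        intro k h
        have hk : Pk k = P' k h := by simp only [hPkdef, dif_pos h]
        rw [hk]; exact hP1 k h
      have hPk2 : ∀ k, k < m + 1 →
          mapC (Polynomial.evalRingHom (1 : ℚ)) (Pk k)
            = (k.factorial : ℚ) • (MonoidAlgebra.single (FreeMonoid.ofList [1]) (1 : ℚ)) ^ k := by
        intro k h
        have hk : Pk k = P' k h := by simp only [hPkdef, dif_pos h]
        rw [hk]; exact hP2 k h
      refine ⟨∑ n ∈ Finset.Icc 1 (m + 1),
        ∑ fv ∈ Finset.Nat.antidiagonalTuple (n + 1) (m + 1 - n),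
          Q m (n + 1) fv • (MonoidAlgebra.single (FreeMonoid.ofList [n]) (1 : Polynomial ℚ)
            * (List.ofFn fun i => Pk (fv i)).prod), ?_, ?_⟩
      · -- image under algebraMap
        have hstep : ((RatFunc.X : RatFunc ℚ) ^ (m + 1) - 1) • g (m + 1)
            = ∑ n ∈ Finset.Icc 1 (m + 1), Sw [n] *
                ∑ fv ∈ Finset.Nat.antidiagonalTuple (n + 1) (m + 1 - n),
                  (List.ofFn fun i => g (fv i)).prod := by
          have h := hrec (m + 1) (Nat.succ_le_succ (Nat.zero_le m))
          rw [sub_smul, one_smul, h, add_sub_cancel_left]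
        rw [mapC_sum]
        have hterm : ∀ n ∈ Finset.Icc 1 (m + 1),
            mapC (algebraMap (Polynomial ℚ) (RatFunc ℚ))
              (∑ fv ∈ Finset.Nat.antidiagonalTuple (n + 1) (m + 1 - n),
                Q m (n + 1) fv • (MonoidAlgebra.single (FreeMonoid.ofList [n]) (1 : Polynomial ℚ)
                  * (List.ofFn fun i => Pk (fv i)).prod))
            = qPoch m • (Sw [n] *
                ∑ fv ∈ Finset.Nat.antidiagonalTuple (n + 1) (m + 1 - n),
                  (List.ofFn fun i => g (fv i)).prod) := by
          intro n hn
          obtain ⟨hn1, hn2⟩ := Finset.mem_Icc.mp hn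
          rw [mapC_sum, Finset.mul_sum, Finset.smul_sum]
          apply Finset.sum_congr rfl
          intro fv hfv
          have hsum : (∑ i : Fin (n + 1), fv i) = m + 1 - n :=
            Finset.Nat.mem_antidiagonalTuple.mp hfv
          have hle : (∑ i : Fin (n + 1), fv i) ≤ m := by omega
          have hfi : ∀ i, fv i < m + 1 := by
            intro i
            have h1 : fv i ≤ ∑ j : Fin (n + 1), fv j :=
              Finset.single_le_sum (fun j _ => Nat.zero_le (fv j)) (Finset.mem_univ i)
            omega
          rw [mapC_smul, mapC_mul, mapC_single, map_one, mapC_listProd, List.map_ofFn]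
          have hcomp : (mapC (algebraMap (Polynomial ℚ) (RatFunc ℚ)) ∘ fun i => Pk (fv i))
              = fun i : Fin (n + 1) => qPoch (fv i) • g (fv i) :=
            funext fun i => hPk1 (fv i) (hfi i)
          rw [hcomp, ofFn_smul_prod, mul_smul_comm, smul_smul]
          have hscal : algebraMap (Polynomial ℚ) (RatFunc ℚ) (Q m (n + 1) fv)
              * ∏ i : Fin (n + 1), qPoch (fv i) = qPoch m := by
            have hpr : (∏ i : Fin (n + 1), qPoch (fv i))
                = algebraMap (Polynomial ℚ) (RatFunc ℚ) (∏ i : Fin (n + 1), qPochP (fv i)) := by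
              rw [map_prod]
              exact Finset.prod_congr rfl fun i _ => (qPochP_map (fv i)).symm
            rw [hpr, ← map_mul, hQ1 m (n + 1) fv hle, qPochP_map]
          rw [hscal]
          rfl
        rw [Finset.sum_congr rfl hterm, ← Finset.smul_sum, ← hstep, smul_smul, ← qPoch_succ]
      · -- evaluation at q = 1
        rw [mapC_sum]
        have hterm : ∀ n ∈ Finset.Icc 1 (m + 1),
            mapC (Polynomial.evalRingHom (1 : ℚ))
              (∑ fv ∈ Finset.Nat.antidiagonalTuple (n + 1) (m + 1 - n),
                Q m (n + 1) fv • (MonoidAlgebra.single (FreeMonoid.ofList [n]) (1 : Polynomial ℚ)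
                  * (List.ofFn fun i => Pk (fv i)).prod))
            = if n = 1 then ((m + 1).factorial : ℚ)
                • (MonoidAlgebra.single (FreeMonoid.ofList [1]) (1 : ℚ)) ^ (m + 1) else 0 := by
          intro n hn
          obtain ⟨hn1, hn2⟩ := Finset.mem_Icc.mp hn
          rw [mapC_sum]
          have hterm2 : ∀ fv ∈ Finset.Nat.antidiagonalTuple (n + 1) (m + 1 - n),
              mapC (Polynomial.evalRingHom (1 : ℚ))
                (Q m (n + 1) fv • (MonoidAlgebra.single (FreeMonoid.ofList [n]) (1 : Polynomial ℚ)
                  * (List.ofFn fun i => Pk (fv i)).prod))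
              = (if m + 1 - n = m then (m.factorial : ℚ) else 0)
                  • (MonoidAlgebra.single (FreeMonoid.ofList [n]) (1 : ℚ)
                    * (MonoidAlgebra.single (FreeMonoid.ofList [1]) (1 : ℚ)) ^ (m + 1 - n)) := by
            intro fv hfv
            have hsum : (∑ i : Fin (n + 1), fv i) = m + 1 - n :=
              Finset.Nat.mem_antidiagonalTuple.mp hfv
            have hfi : ∀ i, fv i < m + 1 := by
              intro i
              have h1 : fv i ≤ ∑ j : Fin (n + 1), fv j :=
                Finset.single_le_sum (fun j _ => Nat.zero_le (fv j)) (Finset.mem_univ i)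
              omega
            rw [mapC_smul, mapC_mul, mapC_single, map_one, mapC_listProd, List.map_ofFn]
            have hcomp : (mapC (Polynomial.evalRingHom (1 : ℚ)) ∘ fun i => Pk (fv i))
                = fun i : Fin (n + 1) => ((fv i).factorial : ℚ)
                    • (MonoidAlgebra.single (FreeMonoid.ofList [1]) (1 : ℚ)) ^ (fv i) :=
              funext fun i => hPk2 (fv i) (hfi i)
            rw [hcomp, ofFn_smul_prod, ofFn_pow_prod, hsum, mul_smul_comm, smul_smul]
            have hscal : (Polynomial.evalRingHom (1 : ℚ)) (Q m (n + 1) fv)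
                * ∏ i : Fin (n + 1), ((fv i).factorial : ℚ)
                = if m + 1 - n = m then (m.factorial : ℚ) else 0 := by
              have h := hQ2 m (n + 1) fv
              rw [hsum] at h
              simpa using h
            rw [hscal]
          rw [Finset.sum_congr rfl hterm2, Finset.sum_const]
          by_cases h1 : n = 1
          · subst h1
            have hpow : MonoidAlgebra.single (FreeMonoid.ofList [1]) (1 : ℚ)
                * (MonoidAlgebra.single (FreeMonoid.ofList [1]) (1 : ℚ)) ^ m
                = (MonoidAlgebra.single (FreeMonoid.ofList [1]) (1 : ℚ)) ^ (m + 1) :=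
              (pow_succ' _ _).symm
            simp only [Nat.add_sub_cancel, eq_self_iff_true, if_true]
            rw [Finset.Nat.antidiagonalTuple_two, Finset.card_map, Finset.Nat.card_antidiagonal,
              ← Nat.cast_smul_eq_nsmul ℚ, smul_smul, hpow, ← Nat.cast_mul, ← Nat.factorial_succ]
          · rw [if_neg h1, if_neg (show ¬(m + 1 - n = m) by omega), zero_smul, smul_zero]
        rw [Finset.sum_congr rfl hterm,
          Finset.sum_ite_eq' (Finset.Icc 1 (m + 1)) 1
            (fun _ => ((m + 1).factorial : ℚ)
              • (MonoidAlgebra.single (FreeMonoid.ofList [1]) (1 : ℚ)) ^ (m + 1)),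
          if_pos (Finset.mem_Icc.mpr ⟨le_refl 1, by omega⟩)]
  intro n hn I
  obtain ⟨P, h1, h2⟩ := claim n
  refine ⟨P.coeff (FreeMonoid.ofList I.blocks), ?_, ?_⟩
  · have h := congrArg (fun x : NSym => x.coeff (FreeMonoid.ofList I.blocks)) h1
    simpa only [mapC_apply, MonoidAlgebra.coeff_smul_apply, smul_eq_mul] using h
  · have h := congrArg
      (fun x : MonoidAlgebra ℚ (FreeMonoid ℕ) => x.coeff (FreeMonoid.ofList I.blocks)) h2
    simp only [mapC_apply, Polynomial.coe_evalRingHom] at h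
    have hpow : (MonoidAlgebra.single (FreeMonoid.ofList [1]) (1 : ℚ)) ^ n
        = MonoidAlgebra.single (FreeMonoid.ofList (List.replicate n 1)) (1 : ℚ) := by
      rw [MonoidAlgebra.single_pow, one_pow, ofList_one_pow n]
    rw [hpow] at h
    rw [h, MonoidAlgebra.coeff_smul_apply, smul_eq_mul]
    by_cases hI : I.blocks = List.replicate n 1
    · rw [if_pos hI, hI, MonoidAlgebra.coeff_single, Finsupp.single_eq_same, mul_one]
    · have hne : FreeMonoid.ofList (List.replicate n 1) ≠ FreeMonoid.ofList I.blocks :=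
        fun hc => hI ((FreeMonoid.ofList.injective hc).symm)
      rw [if_neg hI, MonoidAlgebra.coeff_single, Finsupp.single_apply, if_neg hne, mul_zero]
end
end

section
/- Define bilinear B_q on compositions by B_q(S^I, S^J) = (S^{1IJ} + (q^{|I|}-1)·Ω S^{IJ})/(q^{|I|+|J|+1}-1), where Ω increases the first part of a composition by 1. Then the unique solution of g = 1 + B_q(g,g) in the completed algebra of noncommutative symmetric functions coincides with the solution of the Poincaré equation g(qA) = Σ_{n≥0} S_n(A) g(A)^{n+1}. -/
noncomputable section

open Finset

/-- The operator `Ω` on words: `Ω S^{(i_1,…,i_r)} = S^{(i_1+1,i_2,…,i_r)}`, and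
`Ω S^∅ = S_1`. -/
def omegaW : List ℕ → List ℕ
  | [] => [1]
  | a :: l => (a + 1) :: l

/-- The bilinear map `B_q`, defined on the complete basis by
`B_q(S^I, S^J) = (S^{1IJ} + (q^{|I|}-1) Ω S^{IJ}) / (q^{|I|+|J|+1}-1)`. -/
def Bq (x y : NSym) : NSym :=
  Finsupp.sum x.coeff fun I a => Finsupp.sum y.coeff fun J b =>
    (a * b * ((RatFunc.X : RatFunc ℚ) ^ (I.toList.sum + J.toList.sum + 1) - 1)⁻¹) •
      (Sw (1 :: (I.toList ++ J.toList)) +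
        ((RatFunc.X : RatFunc ℚ) ^ I.toList.sum - 1) • Sw (omegaW (I.toList ++ J.toList)))

local notation "q" => (RatFunc.X : RatFunc ℚ)

instance : DecidableEq (FreeMonoid ℕ) := inferInstanceAs (DecidableEq (List ℕ))

lemma qpow_sub_one_ne {m : ℕ} (hm : 1 ≤ m) : (q ^ m - 1) ≠ 0 := by
  rw [sub_ne_zero]
  intro h2
  have h3 : (Polynomial.X : Polynomial ℚ) ^ m = 1 := by
    apply RatFunc.algebraMap_injective
    simpa using h2
  have := congrArg Polynomial.natDegree h3
  simp [Polynomial.natDegree_X_pow] at this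
  omega

/-- homogeneity of degree m -/
def Hom (m : ℕ) (x : NSym) : Prop := ∀ w ∈ x.coeff.support, (FreeMonoid.toList w).sum = m

lemma Hom_zero (m : ℕ) : Hom m 0 := by simp [Hom]
lemma Hom_Sw {m : ℕ} {l : List ℕ} (h : l.sum = m) : Hom m (Sw l) := by
  intro w hw
  simp [Sw, MonoidAlgebra.coeff_single, Finsupp.support_single_ne_zero _ one_ne_zero] at hw
  subst hw; exact h
lemma Hom_one : Hom 0 (1 : NSym) := Hom_Sw (l := []) rfl
lemma Hom_add {m : ℕ} {x y : NSym} (hx : Hom m x) (hy : Hom m y) : Hom m (x + y) := by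
  intro w hw
  rcases Finset.mem_union.1 (Finsupp.support_add (g₁ := x.coeff) (g₂ := y.coeff) hw) with h | h
  exacts [hx w h, hy w h]
lemma Hom_smul {m : ℕ} {c : RatFunc ℚ} {x : NSym} (hx : Hom m x) : Hom m (c • x) := by
  intro w hw
  exact hx w (Finsupp.support_smul (b := c) (g := x.coeff) hw)
lemma Hom_sum {m : ℕ} {ι : Type*} {s : Finset ι} {f : ι → NSym}
    (hf : ∀ i ∈ s, Hom m (f i)) : Hom m (∑ i ∈ s, f i) := by
  classical
  induction s using Finset.induction_on with
  | empty => simpa using Hom_zero m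
  | insert a s hni ih =>
    rw [Finset.sum_insert hni]
    exact Hom_add (hf a (Finset.mem_insert_self a s))
      (ih fun i hi => hf i (Finset.mem_insert_of_mem hi))
lemma Hom_mul {a b : ℕ} {x y : NSym} (hx : Hom a x) (hy : Hom b y) : Hom (a + b) (x * y) := by
  intro w hw
  have := MonoidAlgebra.support_coeff_mul_subset x y hw
  rw [Finset.mem_mul] at this
  obtain ⟨u, hu, v, hv, rfl⟩ := this
  rw [FreeMonoid.toList_mul, List.sum_append, hx u hu, hy v hv]

lemma Sw_mul (l l' : List ℕ) : Sw l * Sw l' = Sw (l ++ l') := by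
  simp [Sw, MonoidAlgebra.single_mul_single]

def Omega (x : NSym) : NSym :=
  MonoidAlgebra.ofCoeff (Finsupp.mapDomain (fun w => FreeMonoid.ofList (omegaW w.toList)) x.coeff)

lemma Omega_single (w : FreeMonoid ℕ) (c : RatFunc ℚ) :
    Omega (MonoidAlgebra.single w c)
      = MonoidAlgebra.single (FreeMonoid.ofList (omegaW w.toList)) c :=
  congrArg MonoidAlgebra.ofCoeff Finsupp.mapDomain_single

lemma Omega_add (x y : NSym) : Omega (x + y) = Omega x + Omega y :=
  congrArg MonoidAlgebra.ofCoeff Finsupp.mapDomain_add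

lemma Omega_smul (c : RatFunc ℚ) (x : NSym) : Omega (c • x) = c • Omega x :=
  congrArg MonoidAlgebra.ofCoeff (Finsupp.mapDomain_smul c x.coeff)

lemma Omega_sum {ι : Type*} (s : Finset ι) (f : ι → NSym) :
    Omega (∑ i ∈ s, f i) = ∑ i ∈ s, Omega (f i) :=
  MonoidAlgebra.coeff_injective (by
    simp [Omega, MonoidAlgebra.coeff_sum, Finsupp.mapDomain_finset_sum, MonoidAlgebra.coeff_ofCoeff])

lemma Omega_Sn_mul (n : ℕ) (x : NSym) : Omega (Sw [n] * x) = Sw [n + 1] * x := by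
  induction x using MonoidAlgebra.induction_linear with
  | zero => simp [Omega, Finsupp.mapDomain_zero]
  | add a b ha hb => rw [mul_add, Omega_add, ha, hb, mul_add]
  | single w c =>
    have h1 : (Sw [n] : NSym) * MonoidAlgebra.single w c
        = MonoidAlgebra.single (FreeMonoid.ofList (n :: w.toList)) c := by
      simp [Sw, MonoidAlgebra.single_mul_single]
    have h2 : (Sw [n+1] : NSym) * MonoidAlgebra.single w c
        = MonoidAlgebra.single (FreeMonoid.ofList ((n+1) :: w.toList)) c := by
      simp [Sw, MonoidAlgebra.single_mul_single]
    rw [h1, h2, Omega_single]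
    rfl

lemma Sw_one_mul_single (w : FreeMonoid ℕ) (c : RatFunc ℚ) :
    Sw [1] * MonoidAlgebra.single w c = c • Sw (1 :: w.toList) := by
  simp [Sw, MonoidAlgebra.single_mul_single, MonoidAlgebra.smul_single']

lemma toList_mul (I J : FreeMonoid ℕ) : (I * J).toList = I.toList ++ J.toList := rfl

lemma Bq_eq {a b : ℕ} {x y : NSym} (hx : Hom a x) (hy : Hom b y) :
    Bq x y = (q ^ (a + b + 1) - 1)⁻¹ •
      (Sw [1] * (x * y) + (q ^ a - 1) • Omega (x * y)) := by
  have rhs : x * y = ∑ I ∈ x.coeff.support, ∑ J ∈ y.coeff.support,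
      MonoidAlgebra.single (I * J) (x.coeff I * y.coeff J) := by
    rw [MonoidAlgebra.mul_def]; rfl
  have lhs : Bq x y = ∑ I ∈ x.coeff.support, ∑ J ∈ y.coeff.support,
      ((x.coeff I) * (y.coeff J) * (q ^ (I.toList.sum + J.toList.sum + 1) - 1)⁻¹) •
        (Sw (1 :: (I.toList ++ J.toList)) +
          (q ^ I.toList.sum - 1) • Sw (omegaW (I.toList ++ J.toList))) := rfl
  rw [lhs, rhs]
  simp only [Finset.mul_sum, Omega_sum, Finset.smul_sum, ← Finset.sum_add_distrib]
  refine Finset.sum_congr rfl fun I hI => Finset.sum_congr rfl fun J hJ => ?_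
  rw [hx I hI, hy J hJ, Sw_one_mul_single, Omega_single, toList_mul]
  have : MonoidAlgebra.single (FreeMonoid.ofList (omegaW (I.toList ++ J.toList))) (x.coeff I * y.coeff J)
      = (x.coeff I * y.coeff J) • Sw (omegaW (I.toList ++ J.toList)) := by
    simp [Sw, MonoidAlgebra.smul_single']
  rw [this]
  generalize Sw (1 :: (I.toList ++ J.toList)) = A
  generalize Sw (omegaW (I.toList ++ J.toList)) = B
  generalize x.coeff I * y.coeff J = c
  rw [smul_add, smul_add, smul_smul, smul_smul, smul_smul, smul_smul]
  congr 1
  · congr 1; ring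
  · congr 1; ring

def U (h : ℕ → NSym) (k d : ℕ) : NSym :=
  ∑ f ∈ Finset.Nat.antidiagonalTuple k d, (List.ofFn fun i => h (f i)).prod

lemma U_one (h : ℕ → NSym) (d : ℕ) : U h 1 d = h d := by
  simp [U]

lemma U_succ (h : ℕ → NSym) (k d : ℕ) :
    U h (k + 1) d = ∑ p ∈ Finset.HasAntidiagonal.antidiagonal d, U h k p.1 * h p.2 := by
  unfold U
  simp only [Finset.sum_mul]
  rw [← Finset.sum_sigma (Finset.HasAntidiagonal.antidiagonal d) (fun p => Finset.Nat.antidiagonalTuple k p.1)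
    (fun x => (List.ofFn fun i => h (x.2 i)).prod * h x.1.2)]
  refine Finset.sum_nbij'
    (i := fun g => ⟨(∑ i : Fin k, g i.castSucc, g (Fin.last k)), fun i => g i.castSucc⟩)
    (j := fun x => Fin.snoc x.2 x.1.2) ?_ ?_ ?_ ?_ ?_
  · intro g hg
    rw [Finset.Nat.mem_antidiagonalTuple] at hg
    refine Finset.mem_sigma.2 ⟨?_, ?_⟩
    · simp only [Finset.HasAntidiagonal.mem_antidiagonal]
      rw [← hg, Fin.sum_univ_castSucc]
    · simp only [Finset.Nat.mem_antidiagonalTuple]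
  · intro x hx
    rw [Finset.mem_sigma, Finset.HasAntidiagonal.mem_antidiagonal, Finset.Nat.mem_antidiagonalTuple] at hx
    simp only [Finset.Nat.mem_antidiagonalTuple]
    rw [Fin.sum_univ_castSucc]
    simp only [Fin.snoc_castSucc, Fin.snoc_last]
    rw [hx.2, hx.1]
  · intro g hg
    funext i
    exact Fin.lastCases (by simp) (by simp) i
  · intro x hx
    rw [Finset.mem_sigma, Finset.HasAntidiagonal.mem_antidiagonal, Finset.Nat.mem_antidiagonalTuple] at hx
    obtain ⟨⟨p1, p2⟩, f⟩ := x
    simp only [Fin.snoc_castSucc, Fin.snoc_last] at *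
    simp [hx.2]
  · intro g hg
    rw [List.ofFn_succ']
    simp

lemma Hom_prod_ofFn : ∀ {k : ℕ} {f : Fin k → ℕ} {x : Fin k → NSym},
    (∀ i, Hom (f i) (x i)) → Hom (∑ i, f i) ((List.ofFn x).prod)
  | 0, f, x, _ => by simpa using Hom_one
  | k + 1, f, x, hx => by
    rw [List.ofFn_succ, List.prod_cons, Fin.sum_univ_succ]
    exact Hom_mul (hx 0) (Hom_prod_ofFn fun i => hx i.succ)


/-- **The quadratic fixed point equation solves the Poincaré equation.** The unique solution
of `g = 1 + B_q(g,g)` (componentwise: `g_n = Σ_{i+j=n-1} B_q(g_i, g_j)` for `n ≥ 1`,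
`g_0 = 1`) coincides with the solution `h` of the noncommutative Poincaré equation
`h(qA) = Σ_{n≥0} S_n(A) h(A)^{n+1}` (componentwise:
`q^m • h_m = h_m + Σ_{n=1}^m S_n Σ_{i_1+⋯+i_{n+1}=m-n} h_{i_1}⋯h_{i_{n+1}}`, `h_0 = 1`). -/
theorem quadratic_fixed_point_eq_poincare
    (g h : ℕ → NSym) (hg0 : g 0 = 1) (hh0 : h 0 = 1)
    (hg : ∀ n : ℕ, 1 ≤ n →
      g n = ∑ p ∈ Finset.HasAntidiagonal.antidiagonal (n - 1), Bq (g p.1) (g p.2))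
    (hh : ∀ m : ℕ, 1 ≤ m →
      ((RatFunc.X : RatFunc ℚ) ^ m) • h m =
        h m + ∑ n ∈ Finset.Icc 1 m, Sw [n] *
          ∑ f ∈ Finset.Nat.antidiagonalTuple (n + 1) (m - n),
            (List.ofFn fun i => h (f i)).prod) :
    ∀ n : ℕ, g n = h n := by
  -- The Poincaré recursion, rewritten
  have Ph : ∀ a : ℕ, (q ^ a - 1) • h a
      = ∑ t ∈ Finset.Icc 1 a, Sw [t] * U h (t + 1) (a - t) := by
    intro a
    obtain rfl | ha := a.eq_zero_or_pos
    · simp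
    · have := hh a ha
      rw [sub_smul, one_smul, this, add_sub_cancel_left]
      rfl
  -- homogeneity of h
  have homh : ∀ m : ℕ, Hom m (h m) := by
    intro m
    induction m using Nat.strong_induction_on with
    | _ m IH =>
      obtain rfl | hm := m.eq_zero_or_pos
      · rw [hh0]; exact Hom_one
      · have h1 : h m = (q ^ m - 1)⁻¹ • ((q ^ m - 1) • h m) := by
          rw [smul_smul, inv_mul_cancel₀ (qpow_sub_one_ne hm), one_smul]
        rw [h1, Ph m]
        apply Hom_smul
        apply Hom_sum
        intro t ht
        rw [Finset.mem_Icc] at ht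
        have hU : Hom (m - t) (U h (t + 1) (m - t)) := by
          apply Hom_sum
          intro f hf
          rw [Finset.Nat.mem_antidiagonalTuple] at hf
          rw [← hf]
          apply Hom_prod_ofFn
          intro i
          apply IH
          have : f i ≤ ∑ j, f j :=
            Finset.single_le_sum (fun _ _ => Nat.zero_le _) (Finset.mem_univ i)
          omega
        have := Hom_mul (Hom_Sw (by simp : [t].sum = t)) hU
        rwa [Nat.add_sub_cancel' ht.2] at this
  -- main induction
  intro n
  induction n using Nat.strong_induction_on with
  | _ n IH =>
    obtain rfl | hn := n.eq_zero_or_pos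
    · rw [hg0, hh0]
    · rw [hg n hn]
      have step1 : ∑ p ∈ Finset.HasAntidiagonal.antidiagonal (n - 1), Bq (g p.1) (g p.2)
          = ∑ p ∈ Finset.HasAntidiagonal.antidiagonal (n - 1), Bq (h p.1) (h p.2) := by
        refine Finset.sum_congr rfl fun p hp => ?_
        rw [Finset.HasAntidiagonal.mem_antidiagonal] at hp
        rw [IH p.1 (by omega), IH p.2 (by omega)]
      rw [step1]
      -- apply Bq_eq
      have step2 : ∑ p ∈ Finset.HasAntidiagonal.antidiagonal (n - 1), Bq (h p.1) (h p.2)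
          = (q ^ n - 1)⁻¹ • (Sw [1] * (∑ p ∈ Finset.HasAntidiagonal.antidiagonal (n - 1), h p.1 * h p.2)
              + ∑ p ∈ Finset.HasAntidiagonal.antidiagonal (n - 1), (q ^ p.1 - 1) • Omega (h p.1 * h p.2)) := by
        rw [smul_add, Finset.mul_sum, Finset.smul_sum, Finset.smul_sum, ← Finset.sum_add_distrib]
        refine Finset.sum_congr rfl fun p hp => ?_
        rw [Finset.HasAntidiagonal.mem_antidiagonal] at hp
        rw [Bq_eq (homh p.1) (homh p.2), show p.1 + p.2 + 1 = n by omega]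
        rw [smul_add]
      rw [step2]
      -- the first summand
      have stepA : ∑ p ∈ Finset.HasAntidiagonal.antidiagonal (n - 1), h p.1 * h p.2 = U h 2 (n - 1) := by
        rw [U_succ]
        exact Finset.sum_congr rfl fun p _ => by rw [U_one]
      -- the second summand, termwise
      have stepB1 : ∀ p ∈ Finset.HasAntidiagonal.antidiagonal (n - 1),
          (q ^ p.1 - 1) • Omega (h p.1 * h p.2)
            = ∑ t ∈ Finset.Icc 1 p.1, Sw [t + 1] * (U h (t + 1) (p.1 - t) * h p.2) := by
        intro p _
        rw [← Omega_smul, ← smul_mul_assoc, Ph p.1, Finset.sum_mul]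
        simp only [mul_assoc]
        rw [Omega_sum]
        exact Finset.sum_congr rfl fun t _ => Omega_Sn_mul t _
      rw [Finset.sum_congr rfl stepB1]
      -- reindex the double sum
      have stepB2 : ∑ p ∈ Finset.HasAntidiagonal.antidiagonal (n - 1), ∑ t ∈ Finset.Icc 1 p.1,
            Sw [t + 1] * (U h (t + 1) (p.1 - t) * h p.2)
          = ∑ t ∈ Finset.Icc 1 (n - 1), ∑ c ∈ Finset.HasAntidiagonal.antidiagonal (n - 1 - t),
            Sw [t + 1] * (U h (t + 1) c.1 * h c.2) := by
        rw [← Finset.sum_sigma (Finset.HasAntidiagonal.antidiagonal (n - 1)) (fun p => Finset.Icc 1 p.1)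
          (fun x => Sw [x.2 + 1] * (U h (x.2 + 1) (x.1.1 - x.2) * h x.1.2))]
        rw [← Finset.sum_sigma (Finset.Icc 1 (n - 1)) (fun t => Finset.HasAntidiagonal.antidiagonal (n - 1 - t))
          (fun x => Sw [x.1 + 1] * (U h (x.1 + 1) x.2.1 * h x.2.2))]
        refine Finset.sum_nbij' (i := fun x => ⟨x.2, (x.1.1 - x.2, x.1.2)⟩)
          (j := fun x => ⟨(x.1 + x.2.1, x.2.2), x.1⟩) ?_ ?_ ?_ ?_ ?_
        · rintro ⟨⟨p1, p2⟩, t⟩ hx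
          simp only [Finset.mem_sigma, Finset.HasAntidiagonal.mem_antidiagonal, Finset.mem_Icc] at hx ⊢
          omega
        · rintro ⟨t, c1, c2⟩ hx
          simp only [Finset.mem_sigma, Finset.HasAntidiagonal.mem_antidiagonal, Finset.mem_Icc] at hx ⊢
          omega
        · rintro ⟨⟨p1, p2⟩, t⟩ hx
          simp only [Finset.mem_sigma, Finset.HasAntidiagonal.mem_antidiagonal, Finset.mem_Icc] at hx
          simp only
          have : t + (p1 - t) = p1 := by omega
          rw [this]
        · rintro ⟨t, c1, c2⟩ hx
          simp only
          rw [Nat.add_sub_cancel_left]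
        · rintro ⟨⟨p1, p2⟩, t⟩ hx
          rfl
      rw [stepB2]
      -- collapse the inner sum
      have stepB3 : ∀ t ∈ Finset.Icc 1 (n - 1),
          ∑ c ∈ Finset.HasAntidiagonal.antidiagonal (n - 1 - t), Sw [t + 1] * (U h (t + 1) c.1 * h c.2)
            = Sw [t + 1] * U h (t + 2) (n - (t + 1)) := by
        intro t _
        rw [show n - (t + 1) = n - 1 - t by omega, U_succ, Finset.mul_sum]
      rw [Finset.sum_congr rfl stepB3]
      -- shift the index
      have stepB4 : ∑ t ∈ Finset.Icc 1 (n - 1), Sw [t + 1] * U h (t + 2) (n - (t + 1))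
          = ∑ k ∈ Finset.Icc 2 n, Sw [k] * U h (k + 1) (n - k) := by
        refine Finset.sum_nbij' (i := fun t => t + 1) (j := fun k => k - 1) ?_ ?_ ?_ ?_ ?_
        · intro t ht; simp only [Finset.mem_Icc] at ht ⊢; omega
        · intro k hk; simp only [Finset.mem_Icc] at hk ⊢; omega
        · intro t _; omega
        · intro k hk; simp only [Finset.mem_Icc] at hk; omega
        · intro t _; rfl
      rw [stepB4, stepA]
      -- combine into the full Icc 1 n sum
      have comb : Sw [1] * U h 2 (n - 1) + ∑ k ∈ Finset.Icc 2 n, Sw [k] * U h (k + 1) (n - k)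
          = ∑ k ∈ Finset.Icc 1 n, Sw [k] * U h (k + 1) (n - k) := by
        rw [show Finset.Icc 1 n = insert 1 (Finset.Icc 2 n) from by ext; simp; omega]
        rw [Finset.sum_insert (by simp)]
      rw [comb, ← Ph n, smul_smul, inv_mul_cancel₀ (qpow_sub_one_ne hn), one_smul]
end
end

section
/- The map φ defined recursively by φ(∅)=∅, φ(•)=1, and φ(T) = φ(T_2)·(φ(T_1) shifted by max(φ(T_2))-1)·(|T_1| + max(φ(T_2))) for a binary tree T with left subtree T_1 and right subtree T_2 (with max(φ(∅)) := 1), is a bijection from binary trees with n internal nodes to nondecreasing parking functions of length n. -/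
noncomputable section

/-- Binary trees: the empty tree, or a root with a left and a right subtree. -/
inductive BTree where
  | nil : BTree
  | node (l r : BTree) : BTree

/-- Number of (internal) nodes of a binary tree. -/
def bsize : BTree → ℕ
  | .nil => 0
  | .node l r => 1 + bsize l + bsize r

/-- `max` of a word, with the convention that the max of the empty word is `1`. -/
def maxw (w : List ℕ) : ℕ := w.foldr max 1

/-- The map `φ`: `φ(∅) = ∅` and, for a tree with left subtree `T₁` and right subtree `T₂`,
`φ(T) = φ(T₂) · (φ(T₁) shifted by max(φ(T₂)) - 1) · (|T₁| + max(φ(T₂)))`. -/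
def phi : BTree → List ℕ
  | .nil => []
  | .node t1 t2 =>
      phi t2 ++ (phi t1).map (· + (maxw (phi t2) - 1)) ++ [bsize t1 + maxw (phi t2)]

/-- A nondecreasing parking function of length `n`: a weakly increasing word
`a_1 ≤ ⋯ ≤ a_n` of positive integers with `a_i ≤ i`. -/
def IsNDPF (w : List ℕ) : Prop :=
  List.Pairwise (· ≤ ·) w ∧ ∀ i, i < w.length → 1 ≤ w.getD i 0 ∧ w.getD i 0 ≤ i + 1

/- ### basic list lemmas -/

lemma getD_mono {w : List ℕ} (hs : List.Pairwise (· ≤ ·) w) {i j : ℕ} (hij : i ≤ j)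
    (hj : j < w.length) : w.getD i 0 ≤ w.getD j 0 := by
  rcases eq_or_lt_of_le hij with rfl | h
  · exact le_refl _
  · rw [List.getD_eq_getElem _ _ (lt_trans h hj), List.getD_eq_getElem _ _ hj]
    exact List.pairwise_iff_get.mp hs ⟨i, lt_trans h hj⟩ ⟨j, hj⟩ h

lemma getD_take' {w : List ℕ} {L i : ℕ} (h : i < L) (h2 : i < w.length) :
    (w.take L).getD i 0 = w.getD i 0 := by
  have hi : i < (w.take L).length := by simp [h, h2]
  rw [List.getD_eq_getElem _ _ hi, List.getD_eq_getElem _ _ h2]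
  simp [List.get_eq_getElem, List.getElem_take]

lemma getD_drop' {w : List ℕ} {L j : ℕ} (h : L + j < w.length) :
    (w.drop L).getD j 0 = w.getD (L + j) 0 := by
  have hj : j < (w.drop L).length := by simp; omega
  rw [List.getD_eq_getElem _ _ hj, List.getD_eq_getElem _ _ h]
  simp [List.get_eq_getElem]

lemma getD_map' {w : List ℕ} (f : ℕ → ℕ) {j : ℕ} (h : j < w.length) :
    (w.map f).getD j 0 = f (w.getD j 0) := by
  have hj : j < (w.map f).length := by simpa using h
  rw [List.getD_eq_getElem _ _ hj, List.getD_eq_getElem _ _ h]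
  simp

lemma getD_mem {w : List ℕ} {i : ℕ} (h : i < w.length) : w.getD i 0 ∈ w := by
  rw [List.getD_eq_getElem _ _ h]; exact List.getElem_mem _

/- ### maxw lemmas -/

lemma one_le_maxw (w : List ℕ) : 1 ≤ maxw w := by
  induction w with
  | nil => simp [maxw]
  | cons a l ih => simp only [maxw, List.foldr_cons] at *; omega

lemma le_maxw_of_mem {w : List ℕ} {x : ℕ} (h : x ∈ w) : x ≤ maxw w := by
  induction w with
  | nil => simp at h
  | cons a l ih =>
    simp only [maxw, List.foldr_cons] at *
    rcases List.mem_cons.mp h with rfl | h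
    · omega
    · have := ih h; omega

lemma maxw_le {w : List ℕ} {b : ℕ} (h1 : 1 ≤ b) (h : ∀ x ∈ w, x ≤ b) : maxw w ≤ b := by
  induction w with
  | nil => simpa [maxw]
  | cons a l ih =>
    simp only [maxw, List.foldr_cons] at *
    have := h a (by simp)
    have := ih (fun x hx => h x (by simp [hx]))
    omega

lemma maxw_eq_last {w : List ℕ} (hs : List.Pairwise (· ≤ ·) w)
    (hpos : ∀ x ∈ w, 1 ≤ x) (hne : w ≠ []) : maxw w = w.getD (w.length - 1) 0 := by
  have hlen : 0 < w.length := List.length_pos_iff.mpr hne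
  have hlast : w.getD (w.length - 1) 0 ∈ w := getD_mem (by omega)
  refine le_antisymm (maxw_le (hpos _ hlast) ?_) (le_maxw_of_mem hlast)
  intro x hx
  obtain ⟨i, hi, rfl⟩ := List.getElem_of_mem hx
  rw [← List.getD_eq_getElem w 0 hi]
  exact getD_mono hs (by omega) (by omega)

/- ### NDPF lemmas -/

lemma IsNDPF.mem_bounds {w : List ℕ} (h : IsNDPF w) {x : ℕ} (hx : x ∈ w) :
    1 ≤ x ∧ x ≤ w.length := by
  obtain ⟨i, hi, rfl⟩ := List.getElem_of_mem hx
  rw [← List.getD_eq_getElem w 0 hi]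
  have := h.2 i hi
  exact ⟨this.1, by omega⟩

lemma IsNDPF.maxw_le_len {w : List ℕ} (h : IsNDPF w) (hne : w ≠ []) :
    maxw w ≤ w.length := by
  have hlen : 0 < w.length := List.length_pos_iff.mpr hne
  exact maxw_le hlen (fun x hx => (h.mem_bounds hx).2)

lemma IsNDPF.take {w : List ℕ} (h : IsNDPF w) (L : ℕ) : IsNDPF (w.take L) := by
  constructor
  · exact h.1.sublist (List.take_sublist _ _)
  · intro i hi
    simp only [List.length_take] at hi
    rw [getD_take' (by omega) (by omega)]
    exact h.2 i (by omega)

lemma length_phi (t : BTree) : (phi t).length = bsize t := by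
  induction t with
  | nil => simp [phi, bsize]
  | node t1 t2 ih1 ih2 => simp [phi, bsize, ih1, ih2]; omega

lemma ndpf_phi (t : BTree) : IsNDPF (phi t) := by
  induction t with
  | nil => exact ⟨by simp [phi], by intro i hi; simp [phi] at hi⟩
  | node t1 t2 ih1 ih2 =>
    have hm1 : 1 ≤ maxw (phi t2) := one_le_maxw _
    have hmL : maxw (phi t2) ≤ (phi t2).length + 1 := by
      rcases eq_or_ne (phi t2) [] with h | h
      · rw [h]; simp [maxw]
      · have := ih2.maxw_le_len h; omega
    show IsNDPF (phi t2 ++ (phi t1).map (· + (maxw (phi t2) - 1))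
      ++ [bsize t1 + maxw (phi t2)])
    set w1 := phi t1 with hw1
    set w2 := phi t2 with hw2
    set m := maxw w2 with hm
    have ha : w1.length = bsize t1 := length_phi t1
    have hmem1 : ∀ x ∈ w1.map (· + (m - 1)), m ≤ x ∧ x ≤ bsize t1 + m - 1 := by
      intro x hx
      obtain ⟨y, hy, rfl⟩ := List.mem_map.mp hx
      have := ih1.mem_bounds hy
      omega
    have hmem2 : ∀ x ∈ w2, x ≤ m := fun x hx => le_maxw_of_mem hx
    constructor
    · rw [List.pairwise_append, List.pairwise_append]
      refine ⟨⟨ih2.1, ?_, ?_⟩, by simp, ?_⟩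
      · exact (List.pairwise_map).mpr (ih1.1.imp (by intro a b h; omega))
      · intro x hx y hy
        have := hmem1 y hy
        have := hmem2 x hx
        omega
      · intro x hx y hy
        simp only [List.mem_singleton] at hy
        subst hy
        rcases List.mem_append.mp hx with h | h
        · have := hmem2 x h; omega
        · have := hmem1 x h; omega
    · intro i hi
      simp only [List.length_append, List.length_map, List.length_singleton] at hi
      rcases lt_or_ge i w2.length with h | h
      · rw [List.getD_append _ _ _ _ (by simp; omega), List.getD_append _ _ _ _ (by omega)]
        exact ih2.2 i (by omega)
      · rcases lt_or_ge i (w2.length + w1.length) with h2 | h2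
        · rw [List.getD_append _ _ _ _ (by simp; omega),
            List.getD_append_right _ _ _ _ (by omega), getD_map' _ (by omega)]
          have := ih1.2 (i - w2.length) (by omega)
          constructor <;> omega
        · have hi2 : i = w2.length + w1.length := by omega
          rw [List.getD_append_right _ _ _ _ (by simp; omega)]
          simp only [List.length_append, List.length_map]
          rw [hi2, Nat.sub_self]
          simp only [List.getD_cons_zero]
          omega

lemma phi_node_getD_last (t1 t2 : BTree) :
    (phi (BTree.node t1 t2)).getD ((phi t2).length + (phi t1).length) 0
      = bsize t1 + maxw (phi t2) := by
  show (phi t2 ++ (phi t1).map (· + (maxw (phi t2) - 1))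
      ++ [bsize t1 + maxw (phi t2)]).getD _ 0 = _
  rw [List.getD_append_right _ _ _ _ (by simp)]
  simp

lemma phi_node_getD_left (t1 t2 : BTree) {i : ℕ} (h : i < (phi t2).length) :
    (phi (BTree.node t1 t2)).getD i 0 = (phi t2).getD i 0 := by
  show (phi t2 ++ (phi t1).map (· + (maxw (phi t2) - 1))
      ++ [bsize t1 + maxw (phi t2)]).getD i 0 = _
  rw [List.getD_append _ _ _ _ (by simp; omega), List.getD_append _ _ _ _ (by omega)]

lemma phi_node_getD_mid (t1 t2 : BTree) {i : ℕ} (h1 : (phi t2).length ≤ i)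
    (h2 : i < (phi t2).length + (phi t1).length) :
    (phi (BTree.node t1 t2)).getD i 0
      = (phi t1).getD (i - (phi t2).length) 0 + (maxw (phi t2) - 1) := by
  show (phi t2 ++ (phi t1).map (· + (maxw (phi t2) - 1))
      ++ [bsize t1 + maxw (phi t2)]).getD i 0 = _
  rw [List.getD_append _ _ _ _ (by simp; omega),
    List.getD_append_right _ _ _ _ h1, getD_map' _ (by omega)]

lemma phi_len_not_lt (s1 s2 t1 t2 : BTree)
    (h : phi (BTree.node s1 s2) = phi (BTree.node t1 t2)) :
    ¬ ((phi s2).length < (phi t2).length) := by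
  intro hlt
  have hlen := congrArg List.length h
  simp only [phi, List.length_append, List.length_map, List.length_singleton] at hlen
  have has : (phi s1).length = bsize s1 := length_phi s1
  have hbt : (phi t1).length = bsize t1 := length_phi t1
  have hn : (phi s2).length + (phi s1).length = (phi t2).length + (phi t1).length := by omega
  have h1 := phi_node_getD_last s1 s2
  rw [h, hn] at h1
  have h2 := phi_node_getD_last t1 t2
  have hlast : bsize s1 + maxw (phi s2) = bsize t1 + maxw (phi t2) := h1.symm.trans h2
  have hv2ne : phi t2 ≠ [] := by
    intro hh; rw [hh] at hlt; simp at hlt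
  have hm' : maxw (phi t2) = (phi t2).getD ((phi t2).length - 1) 0 :=
    maxw_eq_last (ndpf_phi t2).1 (fun x hx => ((ndpf_phi t2).mem_bounds hx).1) hv2ne
  have hR : (phi (BTree.node t1 t2)).getD ((phi t2).length - 1) 0
      = (phi t2).getD ((phi t2).length - 1) 0 :=
    phi_node_getD_left t1 t2 (by omega)
  have hLft : (phi (BTree.node s1 s2)).getD ((phi t2).length - 1) 0
      = (phi s1).getD ((phi t2).length - 1 - (phi s2).length) 0 + (maxw (phi s2) - 1) :=
    phi_node_getD_mid s1 s2 (by omega) (by omega)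
  have heq := congrArg (fun l => l.getD ((phi t2).length - 1) 0) h
  rw [hLft, hR, ← hm'] at heq
  have hbound := (ndpf_phi s1).2 ((phi t2).length - 1 - (phi s2).length) (by omega)
  have hm1 : 1 ≤ maxw (phi s2) := one_le_maxw _
  omega

lemma phi_inj : ∀ s t : BTree, phi s = phi t → s = t := by
  intro s
  induction s with
  | nil =>
    intro t h
    cases t with
    | nil => rfl
    | node t1 t2 =>
      have := congrArg List.length h
      simp [phi] at this
  | node s1 s2 ih1 ih2 =>
    intro t h
    cases t with
    | nil =>
      have := congrArg List.length h
      simp [phi] at this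
    | node t1 t2 =>
      have hL : (phi s2).length = (phi t2).length :=
        le_antisymm (not_lt.mp (phi_len_not_lt t1 t2 s1 s2 h.symm))
          (not_lt.mp (phi_len_not_lt s1 s2 t1 t2 h))
      have h2 : phi s2 = phi t2 := by
        have htake := congrArg (List.take (phi s2).length) h
        show _ = _
        calc phi s2 = (phi (BTree.node s1 s2)).take (phi s2).length := by
              show _ = (phi s2 ++ _ ++ _).take _
              rw [List.append_assoc, List.take_left]
          _ = (phi (BTree.node t1 t2)).take (phi s2).length := by rw [h]
          _ = phi t2 := by
              show (phi t2 ++ _ ++ _).take _ = _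
              rw [List.append_assoc, hL, List.take_left]
      have hrest : (phi s1).map (· + (maxw (phi s2) - 1)) ++ [bsize s1 + maxw (phi s2)]
          = (phi t1).map (· + (maxw (phi t2) - 1)) ++ [bsize t1 + maxw (phi t2)] := by
        have h' : phi s2 ++ ((phi s1).map (· + (maxw (phi s2) - 1))
              ++ [bsize s1 + maxw (phi s2)])
            = phi s2 ++ ((phi t1).map (· + (maxw (phi t2) - 1))
              ++ [bsize t1 + maxw (phi t2)]) := by
          rw [← List.append_assoc, ← List.append_assoc]
          calc phi s2 ++ (phi s1).map (· + (maxw (phi s2) - 1)) ++ [bsize s1 + maxw (phi s2)]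
              = phi (BTree.node s1 s2) := rfl
            _ = phi (BTree.node t1 t2) := h
            _ = phi t2 ++ (phi t1).map (· + (maxw (phi t2) - 1))
                ++ [bsize t1 + maxw (phi t2)] := rfl
            _ = phi s2 ++ (phi t1).map (· + (maxw (phi t2) - 1))
                ++ [bsize t1 + maxw (phi t2)] := by rw [h2]
        exact List.append_cancel_left h'
      have hlenmap : ((phi s1).map (· + (maxw (phi s2) - 1))).length
          = ((phi t1).map (· + (maxw (phi t2) - 1))).length := by
        have := congrArg List.length hrest
        simp at this
        simpa using this
      obtain ⟨hmapeq, -⟩ := List.append_inj hrest hlenmap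
      rw [h2] at hmapeq
      have h1 : phi s1 = phi t1 :=
        List.map_injective_iff.mpr (fun a b hab => by omega) hmapeq
      rw [ih1 t1 h1, ih2 t2 h2]

lemma ivt (f : ℕ → ℤ) {a b : ℕ} (hstep : ∀ i, a ≤ i → i + 1 ≤ b → f i - 1 ≤ f (i + 1))
    (hab : a ≤ b) (ha : 0 ≤ f a) (hb : f b ≤ 0) : ∃ L, a ≤ L ∧ L ≤ b ∧ f L = 0 := by
  induction b with
  | zero =>
    have : a = 0 := Nat.le_zero.mp hab
    subst this
    exact ⟨0, le_refl _, le_refl _, le_antisymm hb ha⟩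
  | succ b ih =>
    by_cases hz : f (b + 1) = 0
    · exact ⟨b + 1, hab, le_refl _, hz⟩
    · have hneg : f (b + 1) < 0 := lt_of_le_of_ne hb hz
      have hab' : a ≤ b := by
        rcases Nat.lt_or_ge a (b + 1) with h | h
        · omega
        · exfalso
          have : a = b + 1 := by omega
          subst this
          omega
      have hfb : f b ≤ 0 := by
        have := hstep b hab' (le_refl _)
        omega
      obtain ⟨L, h1, h2, h3⟩ := ih (fun i hi hib => hstep i hi (by omega)) hab' hfb
      exact ⟨L, h1, by omega, h3⟩

lemma getLast_eq_getD {w : List ℕ} (h : w ≠ []) : w.getLast h = w.getD (w.length - 1) 0 := by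
  rw [List.getLast_eq_getElem, List.getD_eq_getElem _ _ (by
    have := List.length_pos_iff.mpr h; omega)]

def psiAux : ℕ → List ℕ → BTree
  | 0, _ => .nil
  | fuel + 1, w =>
    if w.length = 0 then .nil
    else if w.getD (w.length - 1) 0 = w.length then .node (psiAux fuel w.dropLast) .nil
    else
      .node
        (psiAux fuel (((w.drop (Nat.findGreatest
          (fun L => 1 ≤ L ∧ w.getD (L - 1) 0 + (w.length - 1 - w.getD (w.length - 1) 0) = L)
          (w.length - 1))).dropLast).map
            (· - (w.getD (Nat.findGreatest
              (fun L => 1 ≤ L ∧ w.getD (L - 1) 0 + (w.length - 1 - w.getD (w.length - 1) 0) = L)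
              (w.length - 1) - 1) 0 - 1))))
        (psiAux fuel (w.take (Nat.findGreatest
          (fun L => 1 ≤ L ∧ w.getD (L - 1) 0 + (w.length - 1 - w.getD (w.length - 1) 0) = L)
          (w.length - 1))))

lemma phi_psiAux : ∀ fuel (w : List ℕ), w.length ≤ fuel → IsNDPF w →
    phi (psiAux fuel w) = w := by
  intro fuel
  induction fuel with
  | zero =>
    intro w hw _
    have : w = [] := List.length_eq_zero_iff.mp (by omega)
    subst this
    simp [psiAux, phi]
  | succ fuel ih =>
    intro w hw hndpf
    by_cases h0 : w.length = 0
    · have : w = [] := List.length_eq_zero_iff.mp h0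
      subst this
      simp [psiAux, phi]
    · have hne : w ≠ [] := fun h => h0 (by simp [h])
      have hn1 : 1 ≤ w.length := by omega
      have hkb := hndpf.2 (w.length - 1) (by omega)
      by_cases hkn : w.getD (w.length - 1) 0 = w.length
      · -- last letter equals n : right subtree empty
        have hdl : IsNDPF w.dropLast := by
          constructor
          · exact hndpf.1.sublist (List.dropLast_sublist w)
          · intro i hi
            rw [List.length_dropLast] at hi
            rw [List.dropLast_eq_take, getD_take' hi (by omega)]
            exact hndpf.2 i (by omega)
        have hphi1 : phi (psiAux fuel w.dropLast) = w.dropLast :=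
          ih _ (by rw [List.length_dropLast]; omega) hdl
        simp only [psiAux]
        rw [if_neg h0, if_pos hkn]
        show phi BTree.nil ++ (phi (psiAux fuel w.dropLast)).map
            (· + (maxw (phi BTree.nil) - 1))
            ++ [bsize (psiAux fuel w.dropLast) + maxw (phi BTree.nil)] = w
        have hmw : maxw (phi BTree.nil) = 1 := rfl
        rw [hmw, hphi1]
        have hbs : bsize (psiAux fuel w.dropLast) = w.length - 1 := by
          rw [← length_phi, hphi1, List.length_dropLast]
        rw [hbs]
        have hmap : w.dropLast.map (· + (1 - 1)) = w.dropLast := by simp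
        rw [hmap]
        show [] ++ (w.dropLast ++ [w.length - 1 + 1]) = w
        rw [List.nil_append, show w.length - 1 + 1 = w.getD (w.length - 1) 0 by omega,
          ← getLast_eq_getD hne, List.dropLast_append_getLast hne]
      · -- last letter k < n
        set n := w.length with hn
        set k := w.getD (n - 1) 0 with hkdef
        have hk1 : 1 ≤ k := hkb.1
        have hkn' : k ≤ n - 1 := by omega
        have hn2 : 2 ≤ n := by omega
        have hg0 : w.getD 0 0 = 1 := by
          have := hndpf.2 0 (by omega)
          omega
        have hmono : ∀ i j : ℕ, i ≤ j → j < n → w.getD i 0 ≤ w.getD j 0 :=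
          fun i j hij hj => getD_mono hndpf.1 hij hj
        set c := n - 1 - k with hcdef
        set f : ℕ → ℤ := fun L => (w.getD (L - 1) 0 : ℤ) + c - L with hfdef
        have hstep : ∀ i, 1 ≤ i → i + 1 ≤ n - 1 → f i - 1 ≤ f (i + 1) := by
          intro i hi1 hi2
          show ((w.getD (i - 1) 0 : ℤ) + c - i) - 1 ≤
            (w.getD (i + 1 - 1) 0 : ℤ) + c - (↑(i + 1) : ℤ)
          have h1 : w.getD (i - 1) 0 ≤ w.getD i 0 := hmono _ _ (by omega) (by omega)
          have h2 : i + 1 - 1 = i := by omega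
          rw [h2]
          push_cast
          omega
        have hb' : f (n - 1) ≤ 0 := by
          show (w.getD (n - 1 - 1) 0 : ℤ) + c - (↑(n - 1) : ℤ) ≤ 0
          have h1 : w.getD (n - 2) 0 ≤ k := hmono _ _ (by omega) (by omega)
          have h2 : n - 1 - 1 = n - 2 := by omega
          rw [h2]
          have h3 : c = n - 1 - k := hcdef
          push_cast
          omega
        have ha' : 0 ≤ f 1 := by
          show (0:ℤ) ≤ (w.getD (1 - 1) 0 : ℤ) + c - (↑(1:ℕ) : ℤ)
          rw [show (1:ℕ) - 1 = 0 from rfl, hg0]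
          push_cast
          omega
        obtain ⟨L0, hL01, hL0b, hL0f⟩ := ivt f hstep (by omega : 1 ≤ n - 1) ha' hb'
        have hL0f' : (w.getD (L0 - 1) 0 : ℤ) + c - L0 = 0 := hL0f
        set P : ℕ → Prop := fun L => 1 ≤ L ∧ w.getD (L - 1) 0 + (n - 1 - k) = L with hP
        have hPL0 : P L0 := by
          refine ⟨hL01, ?_⟩
          rw [← hcdef]
          omega
        set L := Nat.findGreatest P (n - 1) with hLdef
        have hPL : P L := Nat.findGreatest_spec hL0b hPL0
        have hLle : L ≤ n - 1 := Nat.findGreatest_le _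
        have hL1 : 1 ≤ L := hPL.1
        set m := w.getD (L - 1) 0 with hmdef
        have hPm : m + c = L := by rw [hcdef]; exact hPL.2
        have hm1 : 1 ≤ m := (hndpf.2 (L - 1) (by omega)).1
        have hkm : k = m + (n - 1 - L) := by omega
        -- the prefix w2 = w.take L
        have hw2 : IsNDPF (w.take L) := hndpf.take L
        have hw2len : (w.take L).length = L := by
          rw [List.length_take]; omega
        have hw2ne : w.take L ≠ [] := by
          intro h
          rw [h] at hw2len
          simp at hw2len
          omega
        have hmw2 : maxw (w.take L) = m := by
          rw [maxw_eq_last hw2.1 (fun x hx => (hw2.mem_bounds hx).1) hw2ne, hw2len,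
            getD_take' (by omega) (by omega)]
        -- the middle part M
        set M := (w.drop L).dropLast with hMdef
        have hdroplen : (w.drop L).length = n - L := by rw [List.length_drop]
        have hMlen : M.length = n - L - 1 := by
          rw [hMdef, List.length_dropLast, hdroplen]
        have hMget : ∀ j, j < n - L - 1 → M.getD j 0 = w.getD (L + j) 0 := by
          intro j hj
          rw [hMdef, List.dropLast_eq_take, getD_take' (by omega) (by omega),
            getD_drop' (by omega)]
        have hMlow : ∀ j, j < n - L - 1 → m ≤ M.getD j 0 := by
          intro j hj
          rw [hMget j hj]
          exact hmono _ _ (by omega) (by omega)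
        have hMhigh : ∀ j, j < n - L - 1 → M.getD j 0 ≤ m + j := by
          intro j hj
          by_contra hcon
          push_neg at hcon
          rw [hMget j hj] at hcon
          have hfval : 0 ≤ f (L + j + 1) := by
            show (0:ℤ) ≤ (w.getD (L + j + 1 - 1) 0 : ℤ) + c - (↑(L + j + 1) : ℤ)
            have h2 : L + j + 1 - 1 = L + j := by omega
            rw [h2]
            push_cast
            omega
          obtain ⟨L', hL'a, hL'b, hL'f⟩ :=
            ivt f (fun i hi1 hi2 => hstep i (by omega) hi2)
              (by omega : L + j + 1 ≤ n - 1) hfval hb'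
          have hL'f' : (w.getD (L' - 1) 0 : ℤ) + c - L' = 0 := hL'f
          have hPL' : P L' := ⟨by omega, by rw [← hcdef]; omega⟩
          have hfind := Nat.le_findGreatest hL'b hPL'
          rw [← hLdef] at hfind
          omega
        -- the shifted-down middle part w1
        set w1 := M.map (· - (m - 1)) with hw1def
        have hw1len : w1.length = n - L - 1 := by
          rw [hw1def, List.length_map, hMlen]
        have hw1get : ∀ j, j < n - L - 1 → w1.getD j 0 = M.getD j 0 - (m - 1) := by
          intro j hj
          rw [hw1def, getD_map' _ (by omega)]
        have hw1ndpf : IsNDPF w1 := by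
          constructor
          · rw [hw1def]
            refine List.pairwise_map.mpr ?_
            have hMsorted : List.Pairwise (· ≤ ·) M :=
              hndpf.1.sublist ((List.dropLast_sublist _).trans (List.drop_sublist _ _))
            exact hMsorted.imp (fun h => Nat.sub_le_sub_right h _)
          · intro i hi
            rw [hw1len] at hi
            rw [hw1get i hi]
            have := hMlow i hi
            have := hMhigh i hi
            omega
        have hphi2 : phi (psiAux fuel (w.take L)) = w.take L :=
          ih _ (by rw [hw2len]; omega) hw2
        have hphi1 : phi (psiAux fuel w1) = w1 :=
          ih _ (by rw [hw1len]; omega) hw1ndpf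
        -- unfold psiAux and fold back our abbreviations
        simp only [psiAux]
        rw [if_neg (by omega : ¬ (w.length = 0)),
          if_neg (by rw [← hn, ← hkdef]; exact hkn)]
        show phi (psiAux fuel (w.take L)) ++ (phi (psiAux fuel w1)).map
            (· + (maxw (phi (psiAux fuel (w.take L))) - 1))
            ++ [bsize (psiAux fuel w1) + maxw (phi (psiAux fuel (w.take L)))] = w
        rw [hphi1, hphi2, hmw2]
        have hbs : bsize (psiAux fuel w1) = n - L - 1 := by
          rw [← length_phi, hphi1, hw1len]
        rw [hbs]
        have hmap : w1.map (· + (m - 1)) = M := by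
          refine List.ext_getElem (by rw [List.length_map, hw1len, hMlen]) ?_
          intro j h1 h2
          have hj : j < n - L - 1 := by
            rw [List.length_map, hw1len] at h1; exact h1
          rw [List.getElem_map,
            show w1[j]'(by rw [hw1len]; exact hj) = w1.getD j 0 from
              (List.getD_eq_getElem _ _ _).symm,
            show M[j]'h2 = M.getD j 0 from (List.getD_eq_getElem _ _ _).symm,
            hw1get j hj]
          have := hMlow j hj
          omega
        rw [hmap]
        have hdne : w.drop L ≠ [] := by
          intro h
          rw [h] at hdroplen
          simp at hdroplen
          omega
        have hlastdrop : M ++ [k] = w.drop L := by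
          have hlast : (w.drop L).getLast hdne = k := by
            rw [List.getLast_drop, getLast_eq_getD, ← hn, ← hkdef]
          rw [hMdef, show k = (w.drop L).getLast hdne from hlast.symm]
          exact List.dropLast_append_getLast hdne
        have hlastval : n - L - 1 + m = k := by omega
        rw [hlastval, List.append_assoc, hlastdrop, List.take_append_drop]

/-- **The bijection between binary trees and nondecreasing parking functions.** For every
`n`, the map `φ` is a bijection from binary trees with `n` internal nodes onto
nondecreasing parking functions of length `n`. -/
theorem phi_bijective_on_trees (n : ℕ) :
    Set.BijOn phi {t : BTree | bsize t = n} {w : List ℕ | w.length = n ∧ IsNDPF w} := by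
  refine ⟨?_, ?_, ?_⟩
  · intro t ht
    exact ⟨by rw [length_phi]; exact ht, ndpf_phi t⟩
  · intro s _ t _ h
    exact phi_inj s t h
  · intro w hw
    obtain ⟨hlen, hndpf⟩ := hw
    refine ⟨psiAux w.length w, ?_, phi_psiAux _ _ (le_refl _) hndpf⟩
    show bsize _ = n
    rw [← length_phi, phi_psiAux _ _ (le_refl _) hndpf, hlen]
end
end

section
/- The homogeneous components f_n of the solution of the noncommutative Schröder equation f_n = Σ_{k+l=n, l≥1 or k<n} q^k f_k S_l((k+1)A) with f_0 = 1 are given by f_n = L(S_n(A/(1-q))) = Σ_{I⊨n} q^{maj(I)} / ((1-q^{i_1})(1-q^{i_1+i_2})···(1-q^n)) · L(S^I), where L(S^I) = S_{i_1}(A) S_{i_2}((i_1+1)A) ··· S_{i_r}((i_1+...+i_{r-1}+1)A). -/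
noncomputable section

open Finset

/-- `S_k` (with `S_0 = 1`). -/
def Sk (k : ℕ) : NSym :=
  if k = 0 then 1 else MonoidAlgebra.single (FreeMonoid.ofList [k]) 1

/-- `S_n(mA)`: the coefficient of `t^n` in `(Σ_k S_k t^k)^m`. -/
def Sm (m n : ℕ) : NSym :=
  ∑ f ∈ Finset.Nat.antidiagonalTuple m n, (List.ofFn fun i => Sk (f i)).prod

/-- `L(S^I) = S_{i_1}(A) S_{i_2}((i_1+1)A) ⋯ S_{i_r}((i_1+⋯+i_{r-1}+1)A)`, computed with
an accumulator for the partial sums. -/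
def LS : ℕ → List ℕ → NSym
  | _, [] => 1
  | pre, i :: rest => Sm (pre + 1) i * LS (pre + i) rest

/-- `maj(I) = (r-1) i_1 + (r-2) i_2 + ⋯ + i_{r-1}`. -/
def majL (l : List ℕ) : ℕ :=
  ∑ j ∈ Finset.range l.length, (l.length - 1 - j) * l.getD j 0

/-- The denominator `(1-q^{i_1})(1-q^{i_1+i_2})⋯(1-q^{i_1+⋯+i_r})`. -/
def denomL (l : List ℕ) : RatFunc ℚ :=
  ∏ j ∈ Finset.range l.length,
    (1 - (RatFunc.X : RatFunc ℚ) ^ (∑ k ∈ Finset.range (j + 1), l.getD k 0))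

lemma Sm_zero_right (m : ℕ) : Sm m 0 = 1 := by
  simp [Sm, Nat.antidiagonalTuple_zero_right, Sk]

lemma LS_append (pre : ℕ) (a : List ℕ) (l : ℕ) :
    LS pre (a ++ [l]) = LS pre a * Sm (pre + a.sum + 1) l := by
  induction a generalizing pre with
  | nil => simp [LS]
  | cons x xs ih =>
      show Sm (pre + 1) x * LS (pre + x) (xs ++ [l])
          = Sm (pre + 1) x * LS (pre + x) xs * Sm (pre + (x + xs.sum) + 1) l
      rw [ih, ← add_assoc, mul_assoc]

lemma sum_getD (a : List ℕ) : ∑ j ∈ Finset.range a.length, a.getD j 0 = a.sum := by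
  induction a with
  | nil => simp
  | cons x xs ih =>
      rw [List.length_cons, Finset.sum_range_succ']
      simp only [List.getD_cons_succ, List.getD_cons_zero]
      rw [ih, List.sum_cons, add_comm]

lemma majL_append (a : List ℕ) (l : ℕ) : majL (a ++ [l]) = majL a + a.sum := by
  unfold majL
  rw [List.length_append, List.length_singleton, Finset.sum_range_succ]
  have h0 : a.length + 1 - 1 - a.length = 0 := by omega
  rw [h0, zero_mul, add_zero, ← sum_getD a, ← Finset.sum_add_distrib]
  apply Finset.sum_congr rfl
  intro j hj
  have hj' := Finset.mem_range.mp hj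
  rw [List.getD_append _ _ _ _ hj']
  have h1 : a.length + 1 - 1 - j = (a.length - 1 - j) + 1 := by omega
  rw [h1, add_mul, one_mul]

lemma partial_sum_append (a : List ℕ) (l j : ℕ) (hj : j < a.length) :
    ∑ k ∈ Finset.range (j + 1), (a ++ [l]).getD k 0
      = ∑ k ∈ Finset.range (j + 1), a.getD k 0 := by
  apply Finset.sum_congr rfl
  intro k hk
  exact List.getD_append _ _ _ _ (by have := Finset.mem_range.mp hk; omega)

lemma getD_append_self (a : List ℕ) (l : ℕ) : (a ++ [l]).getD a.length 0 = l := by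
  simp [List.getD_eq_getElem?_getD]

lemma denomL_append (a : List ℕ) (l : ℕ) :
    denomL (a ++ [l]) = denomL a * (1 - (RatFunc.X : RatFunc ℚ) ^ (a.sum + l)) := by
  unfold denomL
  rw [List.length_append, List.length_singleton, Finset.prod_range_succ]
  congr 1
  · apply Finset.prod_congr rfl
    intro j hj
    rw [partial_sum_append a l j (Finset.mem_range.mp hj)]
  · rw [Finset.sum_range_succ, getD_append_self]
    have h : ∑ x ∈ Finset.range a.length, (a ++ [l]).getD x 0 = a.sum := by
      rw [← sum_getD a]
      apply Finset.sum_congr rfl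
      intro k hk
      exact List.getD_append _ _ _ _ (Finset.mem_range.mp hk)
    rw [h]

lemma one_sub_X_pow_ne_zero {n : ℕ} (hn : 1 ≤ n) :
    (1 - (RatFunc.X : RatFunc ℚ) ^ n) ≠ 0 := by
  rw [sub_ne_zero]
  intro h
  have h' : (algebraMap (Polynomial ℚ) (RatFunc ℚ)) 1
      = algebraMap (Polynomial ℚ) (RatFunc ℚ) (Polynomial.X ^ n) := by
    rw [map_one, map_pow, RatFunc.algebraMap_X]
    exact h
  have h2 := RatFunc.algebraMap_injective ℚ h'
  have h3 := congrArg Polynomial.natDegree h2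
  simp [Polynomial.natDegree_X_pow] at h3
  omega

lemma denomL_ne_zero {l : List ℕ} (hl : ∀ i ∈ l, 0 < i) : denomL l ≠ 0 := by
  unfold denomL
  apply Finset.prod_ne_zero_iff.mpr
  intro j hj
  apply one_sub_X_pow_ne_zero
  have hj' := Finset.mem_range.mp hj
  have h0 : 0 < l.getD 0 0 := by
    cases l with
    | nil => simp at hj'
    | cons x xs => simpa using hl x (List.mem_cons_self : x ∈ x :: xs)
  have hmem : (0 : ℕ) ∈ Finset.range (j + 1) := Finset.mem_range.mpr (Nat.succ_pos j)
  have hle := Finset.single_le_sum (f := fun k => l.getD k 0) (fun i _ => Nat.zero_le _) hmem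
  exact le_trans h0 hle

lemma comp_zero_blocks (J : Composition 0) : J.blocks = [] := by
  have hs := J.blocks_sum
  cases h : J.blocks with
  | nil => rfl
  | cons x xs =>
      exfalso
      have hx := J.blocks_pos (h ▸ (List.mem_cons_self : x ∈ x :: xs))
      rw [h, List.sum_cons] at hs
      omega

def compCoeff (l : List ℕ) : RatFunc ℚ := RatFunc.X ^ majL l / denomL l

def G (n : ℕ) : NSym := ∑ I : Composition n, compCoeff I.blocks • LS 0 I.blocks

lemma G_zero : G 0 = 1 := by
  rw [G]
  have h1 : ∀ I : Composition 0, compCoeff I.blocks • LS 0 I.blocks = (1 : NSym) := by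
    intro I
    rw [comp_zero_blocks I]
    show compCoeff [] • (1 : NSym) = 1
    have hc : compCoeff [] = 1 := by simp [compCoeff, majL, denomL]
    rw [hc, one_smul]
  rw [Finset.sum_congr rfl fun I _ => h1 I]
  simp [Finset.sum_const, composition_card]

lemma blocks_ne_nil {n : ℕ} (hn : 1 ≤ n) (I : Composition n) : I.blocks ≠ [] := by
  intro h
  have hs := I.blocks_sum
  rw [h, List.sum_nil] at hs
  omega

lemma sum_comp_eq (n : ℕ) (hn : 1 ≤ n) (F : List ℕ → NSym) :
    ∑ I : Composition n, F I.blocks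
      = ∑ k ∈ Finset.range n, ∑ J : Composition k, F (J.blocks ++ [n - k]) := by
  have hne : ∀ I : Composition n, I.blocks ≠ [] := fun I => blocks_ne_nil hn I
  have hsplit : ∀ I : Composition n,
      I.blocks.dropLast.sum + I.blocks.getLast (hne I) = n := by
    intro I
    conv_rhs => rw [← I.blocks_sum, ← List.dropLast_append_getLast (hne I)]
    rw [List.sum_append, List.sum_cons, List.sum_nil, add_zero]
  have hlastpos : ∀ I : Composition n, 0 < I.blocks.getLast (hne I) := fun I =>
    I.blocks_pos (List.getLast_mem (hne I))
  set g : Composition n → ℕ := fun I => n - I.blocks.getLast (hne I) with hg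
  have hmap : ∀ I ∈ (Finset.univ : Finset (Composition n)), g I ∈ Finset.range n := by
    intro I _
    have h1 := hsplit I
    have h2 := hlastpos I
    simp only [hg, Finset.mem_range]
    omega
  rw [← Finset.sum_fiberwise_of_maps_to hmap (fun I => F I.blocks)]
  apply Finset.sum_congr rfl
  intro k hk
  have hkn := Finset.mem_range.mp hk
  have hblocks : ∀ I : Composition n, I ∈ Finset.univ.filter (fun I => g I = k) →
      I.blocks.dropLast ++ [n - k] = I.blocks := by
    intro I hI
    have h1 := (Finset.mem_filter.mp hI).2
    have h2 := hsplit I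
    have h3 : I.blocks.getLast (hne I) = n - k := by simp only [hg] at h1; omega
    rw [← h3]
    exact List.dropLast_append_getLast (hne I)
  refine Finset.sum_bij'
    (i := fun I hI => (⟨I.blocks.dropLast,
        fun hx => I.blocks_pos (List.dropLast_subset _ hx), by
          have h1 := (Finset.mem_filter.mp hI).2
          have h2 := hsplit I
          simp only [hg] at h1
          omega⟩ : Composition k))
    (j := fun J _ => (⟨J.blocks ++ [n - k], by
          intro x hx
          rcases List.mem_append.mp hx with h | h
          · exact J.blocks_pos h
          · have := List.mem_singleton.mp h
            omega, by
          rw [List.sum_append, List.sum_cons, List.sum_nil, add_zero, J.blocks_sum]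
          omega⟩ : Composition n))
    (fun I hI => Finset.mem_univ _) ?_ ?_ ?_ ?_
  · intro J hJ
    refine Finset.mem_filter.mpr ⟨Finset.mem_univ _, ?_⟩
    simp only [hg]
    have hlast : (J.blocks ++ [n - k]).getLast (by simp) = n - k := List.getLast_concat
    rw [hlast]
    omega
  · intro I hI
    exact Composition.ext (hblocks I hI)
  · intro J hJ
    exact Composition.ext List.dropLast_concat
  · intro I hI
    exact congrArg F (hblocks I hI).symm

lemma G_rec (n : ℕ) (hn : 1 ≤ n) :
    (1 - (RatFunc.X : RatFunc ℚ) ^ n) • G n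
      = ∑ k ∈ Finset.range n,
          (RatFunc.X : RatFunc ℚ) ^ k • (G k * Sm (k + 1) (n - k)) := by
  simp only [G]
  rw [sum_comp_eq n hn (fun b => compCoeff b • LS 0 b), Finset.smul_sum]
  apply Finset.sum_congr rfl
  intro k hk
  have hkn := Finset.mem_range.mp hk
  rw [Finset.smul_sum, Finset.sum_mul, Finset.smul_sum]
  apply Finset.sum_congr rfl
  intro J _
  have hsum : J.blocks.sum = k := J.blocks_sum
  rw [LS_append, hsum, zero_add]
  rw [smul_smul, smul_mul_assoc, smul_smul]
  congr 1
  rw [compCoeff, compCoeff, majL_append, denomL_append, hsum]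
  have hkn' : k + (n - k) = n := by omega
  rw [hkn']
  have hc := one_sub_X_pow_ne_zero hn
  have hd : denomL J.blocks ≠ 0 := denomL_ne_zero fun i hi => J.blocks_pos hi
  field_simp
  ring

/-- **Solution of the noncommutative Schröder equation.** If `f : ℕ → NSym` satisfies
`f_0 = 1` and `f_n = Σ_{k+l=n} q^k f_k S_l((k+1)A)`, then
`f_n = L(S_n(A/(1-q))) = Σ_{I ⊨ n} q^{maj(I)} / ((1-q^{i_1})(1-q^{i_1+i_2})⋯(1-q^n)) · L(S^I)`. -/
theorem schroeder_solution_klyachko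
    (f : ℕ → NSym) (hf0 : f 0 = 1)
    (hrec : ∀ n : ℕ, 1 ≤ n →
      f n = ∑ p ∈ Finset.HasAntidiagonal.antidiagonal n,
        ((RatFunc.X : RatFunc ℚ) ^ p.1) • (f p.1 * Sm (p.1 + 1) p.2)) :
    ∀ n : ℕ, 1 ≤ n →
      f n = ∑ I : Composition n,
        (((RatFunc.X : RatFunc ℚ) ^ majL I.blocks) / denomL I.blocks) • LS 0 I.blocks := by
  have key : ∀ n, f n = G n := by
    intro n
    induction n using Nat.strong_induction_on with
    | _ n ih =>
      rcases Nat.eq_zero_or_pos n with h0 | h1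
      · rw [h0, hf0, G_zero]
      · have h := hrec n h1
        rw [Finset.Nat.sum_antidiagonal_eq_sum_range_succ_mk, Finset.sum_range_succ] at h
        simp only [Nat.sub_self, Sm_zero_right, mul_one] at h
        have h2 : (1 - (RatFunc.X : RatFunc ℚ) ^ n) • f n
            = ∑ k ∈ Finset.range n,
                (RatFunc.X : RatFunc ℚ) ^ k • (f k * Sm (k + 1) (n - k)) := by
          rw [sub_smul, one_smul]
          exact sub_eq_of_eq_add h
        have h3 : (1 - (RatFunc.X : RatFunc ℚ) ^ n) • f n
            = (1 - (RatFunc.X : RatFunc ℚ) ^ n) • G n := by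
          rw [h2, G_rec n h1]
          apply Finset.sum_congr rfl
          intro k hk
          rw [ih k (Finset.mem_range.mp hk)]
        exact smul_right_injective NSym (one_sub_X_pow_ne_zero h1) h3
  intro n hn
  rw [key n]
  simp only [G, compCoeff]
end
end
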